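/- Let N be a prime, let 0 < δ₂ and let X, Y, Z ⊆ ℤ/Nℤ be such that each x ∈ X lies in at most δ₂N triangles of (X,Y,Z), each y ∈ Y lies in at most δ₂N triangles of (X,Y,Z), and each z ∈ Z lies in at most δ₂N triangles of (X,Y,Z). Let l ≥ 1 be an integer and set L = 2l+1, and assume 1/20 ≤ L·δ₂ ≤ 1/10 and L < N. Fix a triangle (x,y,z) of (X,Y,Z). Then among all triples (a,b,d) ∈ ℤ/Nℤ × ℤ/Nℤ × (ℤ/Nℤ \ {0}) for which (x,y,z) is valid with respect to (a,b,d), the number of triples for which (x,y,z) is moreover good is at least 2/5 of the number of triples for which it is valid. -/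

import Mathlib

/-- A triangle of subsets `X, Y, Z`: a triple `(x,y,z) ∈ X × Y × Z` with `x + y + z = 0`. -/
def IsTriangle {G : Type*} [AddCommGroup G] (X Y Z : Set G) (x y z : G) : Prop :=
  x ∈ X ∧ y ∈ Y ∧ z ∈ Z ∧ x + y + z = 0

/-- `w` belongs to the "interval" `{a + r·d : r ∈ [-l, l]}` in `ℤ/Nℤ`. -/
def InInterval {N : ℕ} (a d : ZMod N) (l : ℕ) (w : ZMod N) : Prop :=
  ∃ r : ℤ, |r| ≤ (l : ℤ) ∧ w = a + (r : ZMod N) * d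

/-- A triangle `(x,y,z)` of `(X,Y,Z)` is valid with respect to `(a,b,d)` if
`x ∈ I_X = a + [-l,l]d` and `y ∈ I_Y = b + [-l,l]d`. -/
def IsValidTriangle {N : ℕ} (X Y Z : Set (ZMod N)) (a b d : ZMod N) (l : ℕ)
    (x y z : ZMod N) : Prop :=
  IsTriangle X Y Z x y z ∧ InInterval a d l x ∧ InInterval b d l y

/-- A valid triangle is good if each of `x`, `y` and `z` lies in no valid triangle of
`(X,Y,Z)` other than `(x,y,z)` itself. -/
def IsGoodTriangle {N : ℕ} (X Y Z : Set (ZMod N)) (a b d : ZMod N) (l : ℕ)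
    (x y z : ZMod N) : Prop :=
  IsValidTriangle X Y Z a b d l x y z ∧
    ∀ x' y' z', IsValidTriangle X Y Z a b d l x' y' z' →
      (x' = x ∨ y' = y ∨ z' = z) → (x' = x ∧ y' = y ∧ z' = z)

/-- auxiliary: cardinality of a set product -/
lemma myNcardProd {α β : Type*} (s : Set α) (t : Set β) :
    (s ×ˢ t).ncard = s.ncard * t.ncard := by
  rw [← Nat.card_coe_set_eq, ← Nat.card_coe_set_eq, ← Nat.card_coe_set_eq,
    Nat.card_congr (Equiv.Set.prod s t), Nat.card_prod]

/-- the reconstruction map used for the "bad" triples -/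
def psiAux {N : ℕ} (x y : ZMod N) (w : ZMod N) (q : ℤ × ℤ × ℤ) :
    ZMod N × ZMod N × ZMod N :=
  (x - (q.2.1 : ZMod N) * (w * ((q.1 : ZMod N))⁻¹),
   y - (q.2.2 : ZMod N) * (w * ((q.1 : ZMod N))⁻¹),
   w * ((q.1 : ZMod N))⁻¹)

/-- the parametrisation map of the valid triples -/
def phiAux {N : ℕ} (x y : ZMod N) (q : ZMod N × ℤ × ℤ) :
    ZMod N × ZMod N × ZMod N :=
  (x - (q.2.1 : ZMod N) * q.1, y - (q.2.2 : ZMod N) * q.1, q.1)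

/-- index box for bad triples -/
noncomputable def boxAux (l : ℕ) : Finset (ℤ × ℤ × ℤ) :=
  ((Finset.Icc (-(2*l:ℤ)) (2*l)).erase 0) ×ˢ
    (Finset.Icc (-(l:ℤ)) l) ×ˢ (Finset.Icc (-(l:ℤ)) l)

theorem stmt6 {N : ℕ} (hN : N.Prime) (δ₂ : ℝ) (hδ₂ : 0 < δ₂)
    (X Y Z : Set (ZMod N))
    (hX : ∀ x ∈ X, ({p : ZMod N × ZMod N | IsTriangle X Y Z x p.1 p.2}.ncard : ℝ) ≤ δ₂ * N)
    (hY : ∀ y ∈ Y, ({p : ZMod N × ZMod N | IsTriangle X Y Z p.1 y p.2}.ncard : ℝ) ≤ δ₂ * N)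
    (hZ : ∀ z ∈ Z, ({p : ZMod N × ZMod N | IsTriangle X Y Z p.1 p.2 z}.ncard : ℝ) ≤ δ₂ * N)
    (l : ℕ) (hl : 1 ≤ l)
    (hL1 : 1 / 20 ≤ (2 * l + 1 : ℝ) * δ₂) (hL2 : (2 * l + 1 : ℝ) * δ₂ ≤ 1 / 10)
    (hLN : 2 * l + 1 < N)
    (x y z : ZMod N) (hxyz : IsTriangle X Y Z x y z) :
    (2 / 5 : ℝ) * ({p : ZMod N × ZMod N × ZMod N | p.2.2 ≠ 0 ∧
        IsValidTriangle X Y Z p.1 p.2.1 p.2.2 l x y z}.ncard : ℝ) ≤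
      ({p : ZMod N × ZMod N × ZMod N | p.2.2 ≠ 0 ∧
        IsGoodTriangle X Y Z p.1 p.2.1 p.2.2 l x y z}.ncard : ℝ) := by
  classical
  haveI : Fact N.Prime := ⟨hN⟩
  haveI : NeZero N := ⟨hN.ne_zero⟩
  set V : Set (ZMod N × ZMod N × ZMod N) := {p : ZMod N × ZMod N × ZMod N | p.2.2 ≠ 0 ∧
      IsValidTriangle X Y Z p.1 p.2.1 p.2.2 l x y z} with hVdef
  set Gd : Set (ZMod N × ZMod N × ZMod N) := {p : ZMod N × ZMod N × ZMod N | p.2.2 ≠ 0 ∧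
      IsGoodTriangle X Y Z p.1 p.2.1 p.2.2 l x y z} with hGdef
  -- integer cast injectivity
  have hNZ : ((2*l:ℤ)+1) < (N:ℤ) := by exact_mod_cast hLN
  have hkey : ∀ m : ℤ, |m| ≤ 2*(l:ℤ) → ((m : ZMod N) = 0 ↔ m = 0) := by
    intro m hm
    constructor
    · intro h0
      have hdvd : (N:ℤ) ∣ m := (ZMod.intCast_zmod_eq_zero_iff_dvd m N).mp h0
      by_contra hne
      have h1 := Int.le_of_dvd (abs_pos.mpr hne) ((dvd_abs _ _).mpr hdvd)
      omega
    · rintro rfl; simp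
  have hcancel : ∀ (d : ZMod N), d ≠ 0 → ∀ r s : ℤ, |r| ≤ (l:ℤ) → |s| ≤ (l:ℤ) →
      (r : ZMod N) * d = (s : ZMod N) * d → r = s := by
    intro d hd r s hr hs h
    have h0 : ((r - s : ℤ) : ZMod N) = 0 := by
      push_cast
      rw [sub_eq_zero]
      exact mul_right_cancel₀ hd h
    have habs : |r - s| ≤ 2*(l:ℤ) := by
      rw [abs_le] at hr hs ⊢; omega
    have := (hkey _ habs).mp h0
    omega
  -- lower bound for the number of valid triples
  set F : Finset (ZMod N × ℤ × ℤ) :=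
    (Finset.univ.erase (0 : ZMod N)) ×ˢ (Finset.Icc (-(l:ℤ)) l) ×ˢ (Finset.Icc (-(l:ℤ)) l)
    with hFdef
  have hFmem : ∀ q : ZMod N × ℤ × ℤ, q ∈ F ↔
      q.1 ≠ 0 ∧ |q.2.1| ≤ (l:ℤ) ∧ |q.2.2| ≤ (l:ℤ) := by
    intro q
    simp [hFdef, Finset.mem_product, Finset.mem_Icc, abs_le]
  have hFimg : phiAux x y '' ↑F ⊆ V := by
    rintro p ⟨q, hq, rfl⟩
    rw [Finset.mem_coe, hFmem] at hq
    obtain ⟨hd0, hr, hs⟩ := hq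
    refine ⟨hd0, hxyz, ⟨q.2.1, hr, by simp only [phiAux]; ring⟩, ⟨q.2.2, hs, by simp only [phiAux]; ring⟩⟩
  have hFinj : Set.InjOn (phiAux x y) ↑F := by
    intro q hq q' hq' heq
    rw [Finset.mem_coe, hFmem] at hq hq'
    have hd : q.1 = q'.1 := congrArg (fun p => p.2.2) heq
    have h1 : x - (q.2.1 : ZMod N) * q.1 = x - (q'.2.1 : ZMod N) * q.1 := by
      have := congrArg (fun p => p.1) heq
      simpa [phiAux, hd] using this
    have h2 : y - (q.2.2 : ZMod N) * q.1 = y - (q'.2.2 : ZMod N) * q.1 := by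
      have := congrArg (fun p => p.2.1) heq
      simpa [phiAux, hd] using this
    have hr : q.2.1 = q'.2.1 := by
      apply hcancel q.1 hq.1 _ _ hq.2.1 hq'.2.1
      linear_combination -h1
    have hs : q.2.2 = q'.2.2 := by
      apply hcancel q.1 hq.1 _ _ hq.2.2 hq'.2.2
      linear_combination -h2
    exact Prod.ext hd (Prod.ext hr hs)
  have hFcard : F.card = (N-1) * ((2*l+1) * (2*l+1)) := by
    rw [hFdef, Finset.card_product, Finset.card_product,
      Finset.card_erase_of_mem (Finset.mem_univ _), Finset.card_univ, ZMod.card,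
      Int.card_Icc]
    have h2 : ((l:ℤ) + 1 - -(l:ℤ)).toNat = 2*l+1 := by omega
    rw [h2]
  have hVlow : (N-1) * ((2*l+1) * (2*l+1)) ≤ V.ncard := by
    calc (N-1) * ((2*l+1) * (2*l+1)) = F.card := hFcard.symm
    _ = (phiAux x y '' ↑F).ncard := by
        rw [Set.ncard_image_of_injOn hFinj, Set.ncard_coe_finset]
    _ ≤ V.ncard := Set.ncard_le_ncard hFimg (Set.toFinite V)
  -- the three "bad" target sets
  set T₁ : Set (ZMod N × ZMod N) := {p : ZMod N × ZMod N | IsTriangle X Y Z x p.1 p.2} with hT₁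
  set T₂ : Set (ZMod N × ZMod N) := {p : ZMod N × ZMod N | IsTriangle X Y Z p.1 y p.2} with hT₂
  set T₃ : Set (ZMod N × ZMod N) := {p : ZMod N × ZMod N | IsTriangle X Y Z p.1 p.2 z} with hT₃
  have hBoxmem : ∀ q : ℤ × ℤ × ℤ, q ∈ boxAux l ↔
      (q.1 ≠ 0 ∧ |q.1| ≤ 2*(l:ℤ)) ∧ |q.2.1| ≤ (l:ℤ) ∧ |q.2.2| ≤ (l:ℤ) := by
    intro q
    simp [boxAux, Finset.mem_product, Finset.mem_Icc, Finset.mem_erase, abs_le]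
    try tauto
  have hBoxcard : (boxAux l).card = 4*l*((2*l+1)*(2*l+1)) := by
    rw [boxAux, Finset.card_product, Finset.card_product,
      Finset.card_erase_of_mem (by simp [Finset.mem_Icc]), Int.card_Icc, Int.card_Icc]
    have h1 : (2*(l:ℤ) + 1 - -(2*(l:ℤ))).toNat = 4*l+1 := by omega
    have h2 : ((l:ℤ) + 1 - -(l:ℤ)).toNat = 2*l+1 := by omega
    rw [h1, h2]
    congr 1
  -- generic upper bound on images
  have himg : ∀ (T : Set (ZMod N × ZMod N))
      (f : (ZMod N × ZMod N) × ℤ × ℤ × ℤ → ZMod N × ZMod N × ZMod N),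
      (T.ncard : ℝ) ≤ δ₂ * N →
      ((f '' (T ×ˢ (↑(boxAux l) : Set (ℤ × ℤ × ℤ)))).ncard : ℝ) ≤
        δ₂ * N * (4*l*((2*l+1)*(2*l+1))) := by
    intro T f hT
    have hfin : (T ×ˢ (↑(boxAux l) : Set (ℤ × ℤ × ℤ))).Finite :=
      (Set.toFinite T).prod (Finset.finite_toSet _)
    have h1 : (f '' (T ×ˢ (↑(boxAux l) : Set (ℤ × ℤ × ℤ)))).ncard ≤
        T.ncard * (4*l*((2*l+1)*(2*l+1))) := by
      calc (f '' _).ncard ≤ (T ×ˢ (↑(boxAux l) : Set (ℤ × ℤ × ℤ))).ncard :=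
            Set.ncard_image_le hfin
      _ = T.ncard * (4*l*((2*l+1)*(2*l+1))) := by
            rw [myNcardProd, Set.ncard_coe_finset, hBoxcard]
    calc ((f '' _).ncard : ℝ) ≤ (T.ncard : ℝ) * (4*l*((2*l+1)*(2*l+1))) := by
          exact_mod_cast Nat.cast_le.mpr h1 |>.trans_eq (by push_cast; ring)
    _ ≤ δ₂ * N * (4*l*((2*l+1)*(2*l+1))) := by
          apply mul_le_mul_of_nonneg_right hT
          positivity
  -- the covering of V
  have hsub : V ⊆ Gd ∪ (fun q => psiAux x y (q.1.1 - y) q.2) '' (T₁ ×ˢ ↑(boxAux l))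
      ∪ (fun q => psiAux x y (q.1.1 - x) q.2) '' (T₂ ×ˢ ↑(boxAux l))
      ∪ (fun q => psiAux x y (q.1.1 - x) q.2) '' (T₃ ×ˢ ↑(boxAux l)) := by
    rintro ⟨a, b, d⟩ hp
    by_cases hg : (a, b, d) ∈ Gd
    · exact Set.mem_union_left _ (Set.mem_union_left _ (Set.mem_union_left _ hg))
    obtain ⟨hd0, hval⟩ := hp
    have hbad : ¬ IsGoodTriangle X Y Z a b d l x y z := fun h => hg ⟨hd0, h⟩
    rw [IsGoodTriangle] at hbad
    push_neg at hbad
    obtain ⟨x', y', z', hval', hor, h3⟩ := hbad hval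
    obtain ⟨htri, ⟨r, hr, hxa⟩, ⟨s, hs, hyb⟩⟩ := hval
    obtain ⟨htri', ⟨r₁, hr₁, hx'a⟩, ⟨s₁, hs₁, hy'b⟩⟩ := hval'
    have hsum : x + y + z = 0 := htri.2.2.2
    have hsum' : x' + y' + z' = 0 := htri'.2.2.2
    -- helper to produce an element of one of the images
    have main : ∀ (w v : ZMod N) (m r' s' : ℤ), m ≠ 0 → |m| ≤ 2*(l:ℤ) →
        |r'| ≤ (l:ℤ) → |s'| ≤ (l:ℤ) → ((m : ZMod N)) * d = w - v →
        x = a + (r' : ZMod N) * d → y = b + (s' : ZMod N) * d →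
        psiAux x y (w - v) (m, r', s') = (a, b, d) := by
      intro w v m r' s' hm hm2 hr' hs' hmd hxa' hyb'
      have hmne : ((m : ℤ) : ZMod N) ≠ 0 := by
        intro h0
        exact hm ((hkey m hm2).mp h0)
      have hd' : (w - v) * (((m : ℤ) : ZMod N))⁻¹ = d := by
        rw [← hmd, mul_comm ((m : ℤ) : ZMod N) d, mul_assoc, mul_inv_cancel₀ hmne, mul_one]
      simp only [psiAux, hd']
      refine Prod.ext ?_ (Prod.ext ?_ rfl)
      · simp only []; rw [hxa']; ring
      · simp only []; rw [hyb']; ring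
    rcases hor with hx' | hy' | hz'
    · -- shared x
      have hyne : y' ≠ y := by
        intro h
        have hz : z' = z := by
          rw [hx', h] at hsum'
          linear_combination hsum' - hsum
        exact h3 hx' h hz
      have hmd : (((s₁ - s : ℤ)) : ZMod N) * d = y' - y := by
        push_cast
        rw [hy'b, hyb]
        ring
      have hm : s₁ - s ≠ 0 := by
        intro h
        apply hyne
        have h0 : y' - y = 0 := by rw [← hmd, h]; norm_num
        exact sub_eq_zero.mp h0
      have hmemT : ((y', z') : ZMod N × ZMod N) ∈ T₁ := by
        show IsTriangle X Y Z x y' z'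
        rw [← hx']; exact htri'
      have hmemB : ((s₁ - s, r, s) : ℤ × ℤ × ℤ) ∈ (↑(boxAux l) : Set (ℤ × ℤ × ℤ)) := by
        rw [Finset.mem_coe, hBoxmem]
        exact ⟨⟨hm, by rw [abs_le] at hs hs₁ ⊢; omega⟩, hr, hs⟩
      have heval : (fun q => psiAux x y (q.1.1 - y) q.2)
          (((y', z'), (s₁ - s, r, s)) : (ZMod N × ZMod N) × ℤ × ℤ × ℤ) = (a, b, d) :=
        main y' y (s₁ - s) r s hm (by rw [abs_le] at hs hs₁ ⊢; omega) hr hs hmd hxa hyb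
      exact Set.mem_union_left _ (Set.mem_union_left _ (Set.mem_union_right _
        (heval ▸ Set.mem_image_of_mem _ (Set.mem_prod.mpr ⟨hmemT, hmemB⟩))))
    · -- shared y
      have hxne : x' ≠ x := by
        intro h
        have hz : z' = z := by
          rw [h, hy'] at hsum'
          linear_combination hsum' - hsum
        exact h3 h hy' hz
      have hmd : (((r₁ - r : ℤ)) : ZMod N) * d = x' - x := by
        push_cast
        rw [hx'a, hxa]
        ring
      have hm : r₁ - r ≠ 0 := by
        intro h
        apply hxne
        have h0 : x' - x = 0 := by rw [← hmd, h]; norm_num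
        exact sub_eq_zero.mp h0
      have hmemT : ((x', z') : ZMod N × ZMod N) ∈ T₂ := by
        show IsTriangle X Y Z x' y z'
        rw [← hy']; exact htri'
      have hmemB : ((r₁ - r, r, s) : ℤ × ℤ × ℤ) ∈ (↑(boxAux l) : Set (ℤ × ℤ × ℤ)) := by
        rw [Finset.mem_coe, hBoxmem]
        exact ⟨⟨hm, by rw [abs_le] at hr hr₁ ⊢; omega⟩, hr, hs⟩
      have heval : (fun q => psiAux x y (q.1.1 - x) q.2)
          (((x', z'), (r₁ - r, r, s)) : (ZMod N × ZMod N) × ℤ × ℤ × ℤ) = (a, b, d) :=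
        main x' x (r₁ - r) r s hm (by rw [abs_le] at hr hr₁ ⊢; omega) hr hs hmd hxa hyb
      exact Set.mem_union_left _ (Set.mem_union_right _
        (heval ▸ Set.mem_image_of_mem _ (Set.mem_prod.mpr ⟨hmemT, hmemB⟩)))
    · -- shared z
      have hxne : x' ≠ x := by
        intro h
        have hy : y' = y := by
          rw [h, hz'] at hsum'
          linear_combination hsum' - hsum
        exact h3 h hy hz'
      have hmd : (((r₁ - r : ℤ)) : ZMod N) * d = x' - x := by
        push_cast
        rw [hx'a, hxa]
        ring
      have hm : r₁ - r ≠ 0 := by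
        intro h
        apply hxne
        have h0 : x' - x = 0 := by rw [← hmd, h]; norm_num
        exact sub_eq_zero.mp h0
      have hmemT : ((x', y') : ZMod N × ZMod N) ∈ T₃ := by
        show IsTriangle X Y Z x' y' z
        rw [← hz']; exact htri'
      have hmemB : ((r₁ - r, r, s) : ℤ × ℤ × ℤ) ∈ (↑(boxAux l) : Set (ℤ × ℤ × ℤ)) := by
        rw [Finset.mem_coe, hBoxmem]
        exact ⟨⟨hm, by rw [abs_le] at hr hr₁ ⊢; omega⟩, hr, hs⟩
      have heval : (fun q => psiAux x y (q.1.1 - x) q.2)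
          (((x', y'), (r₁ - r, r, s)) : (ZMod N × ZMod N) × ℤ × ℤ × ℤ) = (a, b, d) :=
        main x' x (r₁ - r) r s hm (by rw [abs_le] at hr hr₁ ⊢; omega) hr hs hmd hxa hyb
      exact Set.mem_union_right _
        (heval ▸ Set.mem_image_of_mem _ (Set.mem_prod.mpr ⟨hmemT, hmemB⟩))
  -- cardinality bound for V
  have hVup : V.ncard ≤ Gd.ncard
      + ((fun q => psiAux x y (q.1.1 - y) q.2) '' (T₁ ×ˢ ↑(boxAux l))).ncard
      + ((fun q => psiAux x y (q.1.1 - x) q.2) '' (T₂ ×ˢ ↑(boxAux l))).ncard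
      + ((fun q => psiAux x y (q.1.1 - x) q.2) '' (T₃ ×ˢ ↑(boxAux l))).ncard := by
    calc V.ncard ≤ _ := Set.ncard_le_ncard hsub (Set.toFinite _)
    _ ≤ _ + ((fun q => psiAux x y (q.1.1 - x) q.2) '' (T₃ ×ˢ ↑(boxAux l))).ncard :=
        Set.ncard_union_le _ _
    _ ≤ _ := by
        gcongr
        calc _ ≤ _ + ((fun q => psiAux x y (q.1.1 - x) q.2) '' (T₂ ×ˢ ↑(boxAux l))).ncard :=
            Set.ncard_union_le _ _
        _ ≤ _ := by gcongr; exact Set.ncard_union_le _ _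
  -- real inequalities
  have hb1 := himg T₁ (fun q => psiAux x y (q.1.1 - y) q.2) (hX x hxyz.1)
  have hb2 := himg T₂ (fun q => psiAux x y (q.1.1 - x) q.2) (hY y hxyz.2.1)
  have hb3 := himg T₃ (fun q => psiAux x y (q.1.1 - x) q.2) (hZ z hxyz.2.2.1)
  have hVupR : (V.ncard : ℝ) ≤ (Gd.ncard : ℝ) + 3*(δ₂*N*(4*l*((2*l+1)*(2*l+1)))) := by
    have h := (Nat.cast_le (α := ℝ)).mpr hVup
    push_cast at h
    linarith [hb1, hb2, hb3]
  have hVlowR : ((N:ℝ)-1) * ((2*(l:ℝ)+1)*(2*(l:ℝ)+1)) ≤ (V.ncard : ℝ) := by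
    have h := (Nat.cast_le (α := ℝ)).mpr hVlow
    have hN1 : (1:ℕ) ≤ N := hN.one_lt.le
    push_cast [Nat.cast_sub hN1] at h
    linarith
  have hNR : 2*(l:ℝ)+2 ≤ (N:ℝ) := by exact_mod_cast (by omega : 2*l+2 ≤ N)
  have hlR : (1:ℝ) ≤ (l:ℝ) := by exact_mod_cast hl
  have hNpos : (0:ℝ) ≤ (N:ℝ) := Nat.cast_nonneg N
  have e1 : 12*(N:ℝ)*l*((2*l+1)*δ₂) ≤ 12*(N:ℝ)*l*(1/10) :=
    mul_le_mul_of_nonneg_left hL2 (by positivity)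
  have e1' := mul_le_mul_of_nonneg_right e1 (by positivity : (0:ℝ) ≤ 2*(l:ℝ)+1)
  have e2 : (0:ℝ) ≤ (2*(l:ℝ)+1) * ((N:ℝ) - (2*(l:ℝ)+1)) :=
    mul_nonneg (by positivity) (by linarith)
  have key : 3*(δ₂*(N:ℝ)*(4*(l:ℝ)*((2*(l:ℝ)+1)*(2*(l:ℝ)+1)))) ≤
      (3/5)*(((N:ℝ)-1)*((2*(l:ℝ)+1)*(2*(l:ℝ)+1))) := by
    nlinarith [e1', e2]
  linarith [hVupR, hVlowR, key]
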